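/- For any rotation cube with center r₀, the value E(R_{r₀}) is a lower bound on max_{r in cube} E(R_r), and the upper bound E_U from the relaxed threshold ε + μ satisfies E_U ≥ max_{r in cube} E(R_r) ≥ E(R_{r₀}); moreover as the cube side δ_r → 0 (so μ → 0), E_U − E(R_{r₀}) → 0 whenever no angle equals the threshold exactly. -/

import Mathlib

open Matrix

noncomputable def dot3 (u w : Fin 3 → ℝ) : ℝ := ∑ i, u i * w i

noncomputable def norm3 (u : Fin 3 → ℝ) : ℝ := Real.sqrt (dot3 u u)

/-- Angle between two vectors in ℝ³, in [0, π]. -/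
noncomputable def vangle (u w : Fin 3 → ℝ) : ℝ :=
  Real.arccos (dot3 u w / (norm3 u * norm3 w))

/-- Cross-product (skew-symmetric) matrix of a vector. -/
def crossMat (b : Fin 3 → ℝ) : Matrix (Fin 3) (Fin 3) ℝ :=
  !![0, -b 2, b 1; b 2, 0, -b 0; -b 1, b 0, 0]

/-- Rotation matrix of an axis-angle vector, via the matrix exponential. -/
noncomputable def axisAngleRot (a : Fin 3 → ℝ) : Matrix (Fin 3) (Fin 3) ℝ :=
  NormedSpace.exp (crossMat a)

/-- Inlier-counting objective: E(R) = Σ_j max_k ⟦|∠(n_j, R v_k) − π/2| ≤ ε⟧. -/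
noncomputable def inlierCount {J K : ℕ} (n : Fin J → Fin 3 → ℝ) (v : Fin K → Fin 3 → ℝ)
    (R : Matrix (Fin 3) (Fin 3) ℝ) (ε : ℝ) : ℕ :=
  ∑ j, Finset.univ.sup fun k => if |vangle (n j) (R.mulVec (v k)) - Real.pi / 2| ≤ ε then 1 else 0

/-! ### Auxiliary lemmas -/

section Aux

lemma dot3_expand (u w : Fin 3 → ℝ) : dot3 u w = u 0 * w 0 + u 1 * w 1 + u 2 * w 2 := by
  simp [dot3, Fin.sum_univ_three]

lemma dot3_comm (u w : Fin 3 → ℝ) : dot3 u w = dot3 w u := by simp [dot3_expand]; ring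

lemma dot3_self_nonneg (u : Fin 3 → ℝ) : 0 ≤ dot3 u u := by
  rw [dot3_expand]; nlinarith [sq_nonneg (u 0), sq_nonneg (u 1), sq_nonneg (u 2)]

lemma norm3_nonneg (u : Fin 3 → ℝ) : 0 ≤ norm3 u := Real.sqrt_nonneg _

lemma norm3_sq (u : Fin 3 → ℝ) : norm3 u ^ 2 = dot3 u u := by
  rw [norm3, Real.sq_sqrt (dot3_self_nonneg u)]

lemma dot3_self_eq_one {u : Fin 3 → ℝ} (h : norm3 u = 1) : dot3 u u = 1 := by
  have := norm3_sq u; rw [h] at this; linarith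

lemma dot3_cs (u w : Fin 3 → ℝ) : (dot3 u w)^2 ≤ dot3 u u * dot3 w w := by
  simp only [dot3_expand]
  nlinarith [sq_nonneg (u 0 * w 1 - u 1 * w 0), sq_nonneg (u 0 * w 2 - u 2 * w 0),
    sq_nonneg (u 1 * w 2 - u 2 * w 1)]

lemma dot3_le_norm3_mul (u w : Fin 3 → ℝ) : dot3 u w ≤ norm3 u * norm3 w := by
  have h := dot3_cs u w
  rw [← norm3_sq, ← norm3_sq] at h
  nlinarith [norm3_nonneg u, norm3_nonneg w, mul_nonneg (norm3_nonneg u) (norm3_nonneg w)]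

lemma norm3_smul (t : ℝ) (u : Fin 3 → ℝ) : norm3 (t • u) = |t| * norm3 u := by
  simp only [norm3, dot3_expand, Pi.smul_apply, smul_eq_mul]
  rw [show t * u 0 * (t * u 0) + t * u 1 * (t * u 1) + t * u 2 * (t * u 2)
      = t^2 * (u 0 * u 0 + u 1 * u 1 + u 2 * u 2) by ring,
    Real.sqrt_mul (sq_nonneg t), Real.sqrt_sq_eq_abs]

lemma norm3_zero : norm3 (0 : Fin 3 → ℝ) = 0 := by
  simp [norm3, dot3_expand]

lemma norm3_add_le (u w : Fin 3 → ℝ) : norm3 (u + w) ≤ norm3 u + norm3 w := by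
  have key : dot3 (u + w) (u + w) ≤ (norm3 u + norm3 w) ^ 2 := by
    have h1 := dot3_le_norm3_mul u w
    have h2 : dot3 (u + w) (u + w) = dot3 u u + 2 * dot3 u w + dot3 w w := by
      simp only [dot3_expand, Pi.add_apply]; ring
    rw [h2, ← norm3_sq, ← norm3_sq]
    nlinarith
  calc norm3 (u + w) = Real.sqrt (dot3 (u + w) (u + w)) := rfl
    _ ≤ Real.sqrt ((norm3 u + norm3 w) ^ 2) := Real.sqrt_le_sqrt key
    _ = |norm3 u + norm3 w| := Real.sqrt_sq_eq_abs _
    _ = norm3 u + norm3 w := abs_of_nonneg (add_nonneg (norm3_nonneg u) (norm3_nonneg w))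

lemma crossMat_mulVec (a w : Fin 3 → ℝ) :
    (crossMat a).mulVec w
      = ![a 1 * w 2 - a 2 * w 1, a 2 * w 0 - a 0 * w 2, a 0 * w 1 - a 1 * w 0] := by
  funext i
  fin_cases i <;>
    simp [crossMat, Matrix.mulVec, dotProduct, Fin.sum_univ_three] <;> ring

lemma norm3_cross_le (a w : Fin 3 → ℝ) :
    norm3 ((crossMat a).mulVec w) ≤ norm3 a * norm3 w := by
  have key : dot3 ((crossMat a).mulVec w) ((crossMat a).mulVec w) ≤ dot3 a a * dot3 w w := by
    rw [crossMat_mulVec]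
    simp only [dot3_expand]
    simp only [Matrix.cons_val_zero, Matrix.cons_val_one, Matrix.head_cons,
      Matrix.cons_val_two, Matrix.tail_cons]
    nlinarith [sq_nonneg (a 0 * w 0 + a 1 * w 1 + a 2 * w 2)]
  calc norm3 ((crossMat a).mulVec w) = Real.sqrt (dot3 _ _) := rfl
    _ ≤ Real.sqrt (dot3 a a * dot3 w w) := Real.sqrt_le_sqrt key
    _ = norm3 a * norm3 w := by rw [norm3, norm3, Real.sqrt_mul (dot3_self_nonneg a)]

lemma crossMat_transpose (a : Fin 3 → ℝ) : (crossMat a)ᵀ = -(crossMat a) := by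
  ext i j
  fin_cases i <;> fin_cases j <;> simp [crossMat]

lemma crossMat_sub (x y : Fin 3 → ℝ) : crossMat x - crossMat y = crossMat (x - y) := by
  ext i j
  fin_cases i <;> fin_cases j <;> simp [crossMat] <;> ring

lemma crossMat_smul (t : ℝ) (x : Fin 3 → ℝ) : crossMat (t • x) = t • crossMat x := by
  ext i j
  fin_cases i <;> fin_cases j <;> simp [crossMat]

lemma exp_crossMat_orthogonal (a : Fin 3 → ℝ) :
    (axisAngleRot a)ᵀ * axisAngleRot a = 1 := by
  rw [axisAngleRot, ← Matrix.exp_transpose, crossMat_transpose,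
    ← Matrix.exp_add_of_commute _ _ (Commute.neg_left (Commute.refl (crossMat a)))]
  simp [NormedSpace.exp_zero]

lemma dot3_eq_dotProduct (u w : Fin 3 → ℝ) : dot3 u w = u ⬝ᵥ w := rfl

lemma dot3_mulVec_orth {M : Matrix (Fin 3) (Fin 3) ℝ} (h : Mᵀ * M = 1) (u w : Fin 3 → ℝ) :
    dot3 (M.mulVec u) (M.mulVec w) = dot3 u w := by
  rw [dot3_eq_dotProduct, dot3_eq_dotProduct, Matrix.dotProduct_mulVec,
    ← Matrix.mulVec_transpose, Matrix.mulVec_mulVec, h, Matrix.one_mulVec]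

lemma norm3_mulVec_orth {M : Matrix (Fin 3) (Fin 3) ℝ} (h : Mᵀ * M = 1) (u : Fin 3 → ℝ) :
    norm3 (M.mulVec u) = norm3 u := by
  rw [norm3, dot3_mulVec_orth h, norm3]

lemma pow_orthogonal {M : Matrix (Fin 3) (Fin 3) ℝ} (h : Mᵀ * M = 1) (k : ℕ) :
    (M ^ k)ᵀ * (M ^ k) = 1 := by
  induction k with
  | zero => simp
  | succ m ih =>
    rw [pow_succ', Matrix.transpose_mul]
    calc (M ^ m)ᵀ * Mᵀ * (M * M ^ m) = (M ^ m)ᵀ * (Mᵀ * M) * M ^ m := by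
          rw [Matrix.mul_assoc, Matrix.mul_assoc, Matrix.mul_assoc]
      _ = 1 := by rw [h, Matrix.mul_one, ih]

end Aux

section Angle

lemma dot3_unit_bound {u w : Fin 3 → ℝ} (hu : norm3 u = 1) (hw : norm3 w = 1) :
    -1 ≤ dot3 u w ∧ dot3 u w ≤ 1 := by
  have h := dot3_cs u w
  rw [dot3_self_eq_one hu, dot3_self_eq_one hw] at h
  constructor <;> nlinarith

lemma vangle_unit {u w : Fin 3 → ℝ} (hu : norm3 u = 1) (hw : norm3 w = 1) :
    vangle u w = Real.arccos (dot3 u w) := by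
  rw [vangle, hu, hw]; norm_num

lemma vangle_nonneg (u w : Fin 3 → ℝ) : 0 ≤ vangle u w := Real.arccos_nonneg _

lemma vangle_le_pi (u w : Fin 3 → ℝ) : vangle u w ≤ Real.pi := Real.arccos_le_pi _

lemma vangle_comm (u w : Fin 3 → ℝ) : vangle u w = vangle w u := by
  rw [vangle, vangle, dot3_comm, mul_comm]

lemma arccos_antitone {x y : ℝ} (h : x ≤ y) : Real.arccos y ≤ Real.arccos x := by
  rw [Real.arccos_eq_pi_div_two_sub_arcsin, Real.arccos_eq_pi_div_two_sub_arcsin]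
  have := Real.monotone_arcsin h
  linarith

lemma dot3_sub_smul (u y w : Fin 3 → ℝ) (a b : ℝ) :
    dot3 (u - a • y) (w - b • y) =
      dot3 u w - b * dot3 u y - a * dot3 y w + a * b * dot3 y y := by
  simp only [dot3_expand, Pi.sub_apply, Pi.smul_apply, smul_eq_mul]; ring

/-- Spherical triangle inequality for unit vectors. -/
lemma vangle_triangle {u y w : Fin 3 → ℝ} (hu : norm3 u = 1) (hy : norm3 y = 1)
    (hw : norm3 w = 1) : vangle u w ≤ vangle u y + vangle y w := by
  rw [vangle_unit hu hw, vangle_unit hu hy, vangle_unit hy hw]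
  obtain ⟨ha1, ha2⟩ := dot3_unit_bound hu hy
  obtain ⟨hb1, hb2⟩ := dot3_unit_bound hy hw
  obtain ⟨hc1, hc2⟩ := dot3_unit_bound hu hw
  by_cases hπ : Real.pi ≤ Real.arccos (dot3 u y) + Real.arccos (dot3 y w)
  · exact le_trans (Real.arccos_le_pi _) hπ
  push_neg at hπ
  have h1 : 0 ≤ Real.sqrt (1 - dot3 u y ^ 2) := Real.sqrt_nonneg _
  have h2 : 0 ≤ Real.sqrt (1 - dot3 y w ^ 2) := Real.sqrt_nonneg _
  have e2 : (Real.sqrt (1 - dot3 u y ^ 2) * Real.sqrt (1 - dot3 y w ^ 2)) ^ 2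
      = (1 - dot3 u y ^ 2) * (1 - dot3 y w ^ 2) := by
    rw [mul_pow, Real.sq_sqrt (by nlinarith), Real.sq_sqrt (by nlinarith)]
  have key : dot3 u y * dot3 y w -
      Real.sqrt (1 - dot3 u y ^ 2) * Real.sqrt (1 - dot3 y w ^ 2) ≤ dot3 u w := by
    have hpq : (dot3 u w - dot3 u y * dot3 y w) ^ 2
        ≤ (1 - dot3 u y ^ 2) * (1 - dot3 y w ^ 2) := by
      have hcs := dot3_cs (u - dot3 u y • y) (w - dot3 y w • y)
      have e1 : dot3 (u - dot3 u y • y) (w - dot3 y w • y)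
          = dot3 u w - dot3 u y * dot3 y w := by
        rw [dot3_sub_smul, dot3_self_eq_one hy]; ring
      have ea : dot3 (u - dot3 u y • y) (u - dot3 u y • y) = 1 - dot3 u y ^ 2 := by
        rw [dot3_sub_smul, dot3_self_eq_one hy, dot3_self_eq_one hu, dot3_comm y u]; ring
      have eb : dot3 (w - dot3 y w • y) (w - dot3 y w • y) = 1 - dot3 y w ^ 2 := by
        rw [dot3_sub_smul, dot3_self_eq_one hy, dot3_self_eq_one hw, dot3_comm w y]; ring
      rw [e1, ea, eb] at hcs
      exact hcs
    by_contra hlt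
    push_neg at hlt
    have hx : Real.sqrt (1 - dot3 u y ^ 2) * Real.sqrt (1 - dot3 y w ^ 2)
        < dot3 u y * dot3 y w - dot3 u w := by linarith
    nlinarith [mul_nonneg h1 h2]
  have hsum0 : 0 ≤ Real.arccos (dot3 u y) + Real.arccos (dot3 y w) :=
    add_nonneg (Real.arccos_nonneg _) (Real.arccos_nonneg _)
  have hcos : Real.cos (Real.arccos (dot3 u y) + Real.arccos (dot3 y w)) ≤ dot3 u w := by
    rw [Real.cos_add, Real.cos_arccos ha1 ha2, Real.cos_arccos hb1 hb2,
      Real.sin_arccos, Real.sin_arccos]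
    exact key
  calc Real.arccos (dot3 u w)
      ≤ Real.arccos (Real.cos (Real.arccos (dot3 u y) + Real.arccos (dot3 y w))) :=
        arccos_antitone hcos
    _ = Real.arccos (dot3 u y) + Real.arccos (dot3 y w) := Real.arccos_cos hsum0 (le_of_lt hπ)

lemma abs_vangle_sub_le {nv u w : Fin 3 → ℝ} (hn : norm3 nv = 1) (hu : norm3 u = 1)
    (hw : norm3 w = 1) : |vangle nv u - vangle nv w| ≤ vangle u w := by
  rw [abs_le]
  constructor
  · have := vangle_triangle hn hu hw
    linarith
  · have := vangle_triangle hn hw hu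
    rw [vangle_comm w u] at this
    linarith

end Angle

section Chord

lemma pow_mulVec_bound (x w : Fin 3 → ℝ) {Kb : ℝ} (hx : norm3 x ≤ Kb) (n : ℕ) :
    norm3 ((crossMat x ^ n).mulVec w) ≤ Kb ^ n * norm3 w := by
  induction n with
  | zero => simp [Matrix.one_mulVec]
  | succ m ih =>
    have h0 : 0 ≤ Kb := le_trans (norm3_nonneg x) hx
    rw [pow_succ', ← Matrix.mulVec_mulVec]
    calc norm3 ((crossMat x).mulVec ((crossMat x ^ m).mulVec w))
        ≤ norm3 x * norm3 ((crossMat x ^ m).mulVec w) := norm3_cross_le _ _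
      _ ≤ Kb * (Kb ^ m * norm3 w) :=
          mul_le_mul hx ih (norm3_nonneg _) h0
      _ = Kb ^ (m + 1) * norm3 w := by ring

lemma pow_diff_mulVec_bound (x y w : Fin 3 → ℝ) {Kb : ℝ} (hx : norm3 x ≤ Kb)
    (hy : norm3 y ≤ Kb) (n : ℕ) :
    norm3 ((crossMat x ^ n - crossMat y ^ n).mulVec w)
      ≤ n * Kb ^ (n - 1) * (norm3 (x - y) * norm3 w) := by
  have h0 : 0 ≤ Kb := le_trans (norm3_nonneg x) hx
  induction n with
  | zero => simp [norm3, dot3_expand]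
  | succ m ih =>
    have decomp : crossMat x ^ (m + 1) - crossMat y ^ (m + 1)
        = crossMat x * (crossMat x ^ m - crossMat y ^ m)
          + (crossMat x - crossMat y) * crossMat y ^ m := by
      rw [pow_succ', pow_succ']
      noncomm_ring
    rw [decomp, Matrix.add_mulVec, ← Matrix.mulVec_mulVec, ← Matrix.mulVec_mulVec]
    have t1 : norm3 ((crossMat x).mulVec ((crossMat x ^ m - crossMat y ^ m).mulVec w))
        ≤ Kb * (m * Kb ^ (m - 1) * (norm3 (x - y) * norm3 w)) := by
      calc norm3 ((crossMat x).mulVec ((crossMat x ^ m - crossMat y ^ m).mulVec w))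
          ≤ norm3 x * norm3 ((crossMat x ^ m - crossMat y ^ m).mulVec w) := norm3_cross_le _ _
        _ ≤ Kb * (m * Kb ^ (m - 1) * (norm3 (x - y) * norm3 w)) :=
            mul_le_mul hx ih (norm3_nonneg _) h0
    have t2 : norm3 ((crossMat x - crossMat y).mulVec ((crossMat y ^ m).mulVec w))
        ≤ norm3 (x - y) * (Kb ^ m * norm3 w) := by
      rw [crossMat_sub]
      calc norm3 ((crossMat (x - y)).mulVec ((crossMat y ^ m).mulVec w))
          ≤ norm3 (x - y) * norm3 ((crossMat y ^ m).mulVec w) := norm3_cross_le _ _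
        _ ≤ norm3 (x - y) * (Kb ^ m * norm3 w) :=
            mul_le_mul_of_nonneg_left (pow_mulVec_bound y w hy m) (norm3_nonneg _)
    have tri := norm3_add_le ((crossMat x).mulVec ((crossMat x ^ m - crossMat y ^ m).mulVec w))
      ((crossMat x - crossMat y).mulVec ((crossMat y ^ m).mulVec w))
    have harith : Kb * ((m : ℝ) * Kb ^ (m - 1) * (norm3 (x - y) * norm3 w))
        + norm3 (x - y) * (Kb ^ m * norm3 w)
        ≤ (↑(m + 1)) * Kb ^ (m + 1 - 1) * (norm3 (x - y) * norm3 w) := by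
      cases m with
      | zero => simp
      | succ p =>
        simp only [Nat.add_sub_cancel]
        push_cast
        have e1 : Kb * (((p : ℝ) + 1) * Kb ^ p * (norm3 (x - y) * norm3 w))
            + norm3 (x - y) * (Kb ^ (p + 1) * norm3 w)
            = ((p : ℝ) + 1 + 1) * Kb ^ (p + 1) * (norm3 (x - y) * norm3 w) := by ring
        exact le_of_eq e1
    linarith

lemma norm_euclid (u : Fin 3 → ℝ) :
    ‖(WithLp.equiv 2 (Fin 3 → ℝ)).symm u‖ = norm3 u := by
  rw [EuclideanSpace.norm_eq, norm3]
  congr 1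
  rw [dot3_expand, Fin.sum_univ_three]
  simp [WithLp.equiv_symm_apply, PiLp.toLp_apply, Real.norm_eq_abs, sq_abs]
  ring

/-- Chord bound: difference of two rotations applied to a vector. -/
lemma chord_bound (x y w : Fin 3 → ℝ) {Kb : ℝ} (hx : norm3 x ≤ Kb) (hy : norm3 y ≤ Kb)
    (hK : Kb < 1) :
    norm3 ((axisAngleRot x).mulVec w - (axisAngleRot y).mulVec w)
      ≤ norm3 (x - y) * norm3 w * (1 - Kb)⁻¹ := by
  classical
  have h0 : 0 ≤ Kb := le_trans (norm3_nonneg x) hx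
  letI : SeminormedRing (Matrix (Fin 3) (Fin 3) ℝ) := Matrix.linftyOpSemiNormedRing
  letI : NormedRing (Matrix (Fin 3) (Fin 3) ℝ) := Matrix.linftyOpNormedRing
  letI : NormedAlgebra ℝ (Matrix (Fin 3) (Fin 3) ℝ) := Matrix.linftyOpNormedAlgebra
  -- the linear map A ↦ A.mulVec w into Euclidean space
  let L : Matrix (Fin 3) (Fin 3) ℝ →ₗ[ℝ] EuclideanSpace ℝ (Fin 3) :=
    { toFun := fun A => (WithLp.equiv 2 (Fin 3 → ℝ)).symm (A.mulVec w)
      map_add' := fun A B => by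
        ext i
        simp [Matrix.add_mulVec, WithLp.equiv_symm_apply, PiLp.toLp_apply]
      map_smul' := fun t A => by
        ext i
        simp [Matrix.smul_mulVec, WithLp.equiv_symm_apply, PiLp.toLp_apply] }
  let T : Matrix (Fin 3) (Fin 3) ℝ →L[ℝ] EuclideanSpace ℝ (Fin 3) :=
    LinearMap.toContinuousLinearMap L
  have hTapp : ∀ A : Matrix (Fin 3) (Fin 3) ℝ,
      T A = (WithLp.equiv 2 (Fin 3 → ℝ)).symm (A.mulVec w) := fun A => rfl
  have hX : HasSum (fun n : ℕ => ((n.factorial : ℝ))⁻¹ • crossMat x ^ n)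
      (NormedSpace.exp (crossMat x)) := NormedSpace.exp_series_hasSum_exp' (crossMat x)
  have hY : HasSum (fun n : ℕ => ((n.factorial : ℝ))⁻¹ • crossMat y ^ n)
      (NormedSpace.exp (crossMat y)) := NormedSpace.exp_series_hasSum_exp' (crossMat y)
  have hsum : HasSum
      (fun n : ℕ => T (((n.factorial : ℝ))⁻¹ • crossMat x ^ n)
        - T (((n.factorial : ℝ))⁻¹ • crossMat y ^ n))
      (T (NormedSpace.exp (crossMat x)) - T (NormedSpace.exp (crossMat y))) :=
    (hX.mapL T).sub (hY.mapL T)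
  -- the scalar majorant
  set c : ℝ := norm3 (x - y) * norm3 w with hc
  have hc0 : 0 ≤ c := mul_nonneg (norm3_nonneg _) (norm3_nonneg _)
  have hgeo : HasSum (fun n : ℕ => c * Kb ^ n) (c * (1 - Kb)⁻¹) :=
    (hasSum_geometric_of_lt_one h0 hK).mul_left c
  set g : ℕ → ℝ := fun n => if n = 0 then 0 else c * Kb ^ (n - 1) with hg
  have hgsum : HasSum g (c * (1 - Kb)⁻¹) := by
    have h1 : (fun n : ℕ => g (n + 1)) = fun n : ℕ => c * Kb ^ n := by
      funext n; simp [hg]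
    rw [← hasSum_nat_add_iff' 1, h1]
    simpa [hg] using hgeo
  have hbound : ∀ n : ℕ,
      ‖T (((n.factorial : ℝ))⁻¹ • crossMat x ^ n)
        - T (((n.factorial : ℝ))⁻¹ • crossMat y ^ n)‖ ≤ g n := by
    intro n
    rw [← map_sub, ← smul_sub, _root_.map_smul, norm_smul]
    rw [hTapp, norm_euclid]
    cases n with
    | zero => simp [hg, norm3_zero]
    | succ m =>
      have hfac : ‖((((m + 1).factorial : ℝ)))⁻¹‖ = (((m + 1).factorial : ℝ))⁻¹ := by
        rw [Real.norm_eq_abs, abs_of_nonneg]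
        positivity
      rw [hfac]
      have hb := pow_diff_mulVec_bound x y w hx hy (m + 1)
      have hfle : ((m + 1 : ℕ) : ℝ) * (((m + 1).factorial : ℝ))⁻¹ ≤ 1 := by
        rw [mul_inv_le_iff₀ (by positivity), one_mul]
        exact_mod_cast Nat.self_le_factorial (m + 1)
      have hgn : g (m + 1) = c * Kb ^ m := by simp [hg]
      rw [hgn]
      calc (((m + 1).factorial : ℝ))⁻¹ * norm3 ((crossMat x ^ (m+1) - crossMat y ^ (m+1)).mulVec w)
          ≤ (((m + 1).factorial : ℝ))⁻¹ * (((m + 1 : ℕ) : ℝ) * Kb ^ (m + 1 - 1) * c) := by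
            apply mul_le_mul_of_nonneg_left _ (by positivity)
            exact_mod_cast hb
        _ = (((m + 1 : ℕ) : ℝ) * (((m + 1).factorial : ℝ))⁻¹) * (Kb ^ m * c) := by
            rw [show m + 1 - 1 = m from rfl]; ring
        _ ≤ 1 * (Kb ^ m * c) := by
            apply mul_le_mul_of_nonneg_right hfle
            positivity
        _ = c * Kb ^ m := by ring
  have hnorm := tsum_of_norm_bounded hgsum hbound
  rw [hsum.tsum_eq] at hnorm
  have heq : T (NormedSpace.exp (crossMat x)) - T (NormedSpace.exp (crossMat y))
      = (WithLp.equiv 2 (Fin 3 → ℝ)).symm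
        ((axisAngleRot x).mulVec w - (axisAngleRot y).mulVec w) := by
    rw [hTapp, hTapp]
    ext i
    simp [axisAngleRot, WithLp.equiv_symm_apply, PiLp.toLp_apply]
  rw [heq, norm_euclid] at hnorm
  calc norm3 ((axisAngleRot x).mulVec w - (axisAngleRot y).mulVec w) ≤ c * (1 - Kb)⁻¹ := hnorm
    _ = norm3 (x - y) * norm3 w * (1 - Kb)⁻¹ := by rw [hc]

end Chord

section RotAngle

lemma mul_orthogonal {A B : Matrix (Fin 3) (Fin 3) ℝ} (hA : Aᵀ * A = 1) (hB : Bᵀ * B = 1) :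
    (A * B)ᵀ * (A * B) = 1 := by
  rw [Matrix.transpose_mul]
  calc Bᵀ * Aᵀ * (A * B) = Bᵀ * (Aᵀ * A) * B := by
        rw [Matrix.mul_assoc, Matrix.mul_assoc, Matrix.mul_assoc]
    _ = 1 := by rw [hA, Matrix.mul_one, hB]

lemma vangle_mulVec_orth {M : Matrix (Fin 3) (Fin 3) ℝ} (h : Mᵀ * M = 1) (u w : Fin 3 → ℝ) :
    vangle (M.mulVec u) (M.mulVec w) = vangle u w := by
  rw [vangle, vangle, dot3_mulVec_orth h, norm3_mulVec_orth h, norm3_mulVec_orth h]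

lemma vangle_self_unit {u : Fin 3 → ℝ} (hu : norm3 u = 1) : vangle u u = 0 := by
  rw [vangle_unit hu hu, dot3_self_eq_one hu, Real.arccos_one]

/-- Angle bound from chord bound, with cubic error. -/
lemma vangle_le_chord_cubic {u w : Fin 3 → ℝ} (hu : norm3 u = 1) (hw : norm3 w = 1)
    {l : ℝ} (h0 : 0 ≤ l) (hchord : norm3 (u - w) ≤ l) (hl : l ≤ 1 / 2) :
    vangle u w ≤ l + l ^ 3 := by
  have hdot : 1 - l ^ 2 / 2 ≤ dot3 u w := by
    have h1 : dot3 (u - w) (u - w) = 2 - 2 * dot3 u w := by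
      have := dot3_self_eq_one hu
      have := dot3_self_eq_one hw
      have hcomm := dot3_comm u w
      simp only [dot3_expand, Pi.sub_apply] at *
      nlinarith [dot3_expand u u]
    have h2 : dot3 (u - w) (u - w) ≤ l ^ 2 := by
      have := norm3_sq (u - w)
      nlinarith [norm3_nonneg (u - w)]
    linarith
  set a : ℝ := l + l ^ 3 with ha
  have ha0 : 0 ≤ a := by positivity
  have ha1 : a ≤ 1 := by rw [ha]; nlinarith
  have hcosa : Real.cos a ≤ 1 - l ^ 2 / 2 := by
    have hb := Real.cos_bound (x := a) (by rw [abs_of_nonneg ha0]; exact ha1)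
    have h3 : Real.cos a ≤ 1 - a ^ 2 / 2 + |a| ^ 4 * (5 / 96) := by
      have := abs_le.mp hb
      linarith
    rw [abs_of_nonneg ha0] at h3
    have h4 : 1 - a ^ 2 / 2 + a ^ 4 * (5 / 96) ≤ 1 - l ^ 2 / 2 := by
      have hl2 : l ^ 2 ≤ 1 / 4 := by nlinarith
      have h5 : (l + l ^ 3) ^ 4 ≤ (5 / 4 * l) ^ 4 := by
        apply pow_le_pow_left₀ (by positivity) (by nlinarith)
      rw [ha]
      nlinarith [h5, pow_nonneg h0 3, pow_nonneg h0 4, pow_nonneg h0 6, sq_nonneg l]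
    linarith
  have hcos : Real.cos a ≤ dot3 u w := le_trans hcosa hdot
  rw [vangle_unit hu hw]
  calc Real.arccos (dot3 u w) ≤ Real.arccos (Real.cos a) := arccos_antitone hcos
    _ = a := Real.arccos_cos ha0 (le_trans ha1 (by linarith [Real.pi_gt_three]))

lemma axisAngleRot_pow (a : Fin 3 → ℝ) {N : ℕ} (hN : N ≠ 0) :
    axisAngleRot a = axisAngleRot ((N : ℝ)⁻¹ • a) ^ N := by
  rw [axisAngleRot, axisAngleRot, ← Matrix.exp_nsmul]
  congr 1
  rw [crossMat_smul, ← Nat.cast_smul_eq_nsmul ℝ, smul_smul,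
    mul_inv_cancel₀ (by exact_mod_cast hN), one_smul]

/-- The key geometric estimate: rotations move vectors on the sphere at most by
the distance between their axis-angle representations. -/
lemma rot_angle_le (x y v : Fin 3 → ℝ) (hv : norm3 v = 1) :
    vangle ((axisAngleRot x).mulVec v) ((axisAngleRot y).mulVec v) ≤ norm3 (x - y) := by
  set d : ℝ := norm3 (x - y) with hd
  have hd0 : 0 ≤ d := norm3_nonneg _
  set Kc : ℝ := max (norm3 x) (norm3 y) with hKc
  have hK0 : 0 ≤ Kc := le_trans (norm3_nonneg x) (le_max_left _ _)
  set A : ℝ := vangle ((axisAngleRot x).mulVec v) ((axisAngleRot y).mulVec v) with hA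
  -- Main claim for large N
  have claim : ∀ N : ℕ, 2 * Kc + 1 ≤ (N : ℝ) → 4 * d + 1 ≤ (N : ℝ) →
      A ≤ d * (1 - Kc / N)⁻¹ + 8 * d ^ 3 / (N : ℝ) ^ 2 := by
    intro N hKN hdN
    have hN1 : (1 : ℝ) ≤ (N : ℝ) := by linarith
    have hN0 : (N : ℝ) ≠ 0 := by linarith
    have hNnat : N ≠ 0 := by
      intro h; rw [h] at hN1; norm_num at hN1
    have hKN2 : Kc / N ≤ 1 / 2 := by
      rw [div_le_iff₀ (by linarith)]; linarith
    have hKNlt : Kc / N < 1 := lt_of_le_of_lt hKN2 (by norm_num)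
    set l : ℝ := d / N * (1 - Kc / N)⁻¹ with hl
    have hinv2 : (1 - Kc / N)⁻¹ ≤ 2 := by
      rw [inv_le_comm₀ (by linarith) (by norm_num)]
      linarith
    have hinv0 : 0 < (1 - Kc / N)⁻¹ := by
      apply inv_pos.mpr; linarith
    have hl0 : 0 ≤ l := by
      apply mul_nonneg (div_nonneg hd0 (by linarith)) (le_of_lt hinv0)
    have hl2d : l ≤ 2 * d / N := by
      rw [hl]
      calc d / N * (1 - Kc / N)⁻¹ ≤ d / N * 2 :=
            mul_le_mul_of_nonneg_left hinv2 (div_nonneg hd0 (by linarith))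
        _ = 2 * d / N := by ring
    have hlhalf : l ≤ 1 / 2 := by
      have : 2 * d / N ≤ 1 / 2 := by
        rw [div_le_iff₀ (by linarith)]; linarith
      linarith
    -- per-step matrices
    set x' : Fin 3 → ℝ := (N : ℝ)⁻¹ • x with hx'
    set y' : Fin 3 → ℝ := (N : ℝ)⁻¹ • y with hy'
    set P : Matrix (Fin 3) (Fin 3) ℝ := axisAngleRot x' with hP
    set Q : Matrix (Fin 3) (Fin 3) ℝ := axisAngleRot y' with hQ
    have hPo : Pᵀ * P = 1 := exp_crossMat_orthogonal x'
    have hQo : Qᵀ * Q = 1 := exp_crossMat_orthogonal y'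
    have hxK : norm3 x' ≤ Kc / N := by
      rw [hx', norm3_smul, abs_of_nonneg (by positivity)]
      rw [inv_mul_eq_div, div_le_div_iff_of_pos_right (by linarith)]
      exact le_max_left _ _
    have hyK : norm3 y' ≤ Kc / N := by
      rw [hy', norm3_smul, abs_of_nonneg (by positivity)]
      rw [inv_mul_eq_div, div_le_div_iff_of_pos_right (by linarith)]
      exact le_max_right _ _
    have hdiff : norm3 (x' - y') = d / N := by
      rw [hx', hy', ← smul_sub, norm3_smul, abs_of_nonneg (by positivity), hd]
      ring
    -- step bound
    have step : ∀ w : Fin 3 → ℝ, norm3 w = 1 →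
        vangle (P.mulVec w) (Q.mulVec w) ≤ l + l ^ 3 := by
      intro w hw
      have hchord := chord_bound x' y' w hxK hyK hKNlt
      rw [hdiff, hw, mul_one] at hchord
      exact vangle_le_chord_cubic (by rw [hP]; exact (norm3_mulVec_orth hPo w).trans hw)
        (by rw [hQ]; exact (norm3_mulVec_orth hQo w).trans hw) hl0 hchord hlhalf
    -- telescoping
    have tele : ∀ m k : ℕ, vangle ((P ^ m * Q ^ k).mulVec v) ((Q ^ (m + k)).mulVec v)
        ≤ m * (l + l ^ 3) := by
      intro m
      induction m with
      | zero =>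
        intro k
        simp only [pow_zero, Matrix.one_mul, Nat.zero_add, Nat.cast_zero, zero_mul]
        exact le_of_eq (vangle_self_unit ((norm3_mulVec_orth (pow_orthogonal hQo k) v).trans hv))
      | succ m ih =>
        intro k
        have hQkv : norm3 ((Q ^ k).mulVec v) = 1 :=
          (norm3_mulVec_orth (pow_orthogonal hQo k) v).trans hv
        have hu1 : norm3 ((P ^ (m + 1) * Q ^ k).mulVec v) = 1 :=
          (norm3_mulVec_orth (mul_orthogonal (pow_orthogonal hPo (m + 1))
            (pow_orthogonal hQo k)) v).trans hv
        have hu2 : norm3 ((P ^ m * Q ^ (k + 1)).mulVec v) = 1 :=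
          (norm3_mulVec_orth (mul_orthogonal (pow_orthogonal hPo m)
            (pow_orthogonal hQo (k + 1))) v).trans hv
        have hu3 : norm3 ((Q ^ (m + 1 + k)).mulVec v) = 1 :=
          (norm3_mulVec_orth (pow_orthogonal hQo (m + 1 + k)) v).trans hv
        have htri := vangle_triangle hu1 hu2 hu3
        have hstep : vangle ((P ^ (m + 1) * Q ^ k).mulVec v) ((P ^ m * Q ^ (k + 1)).mulVec v)
            ≤ l + l ^ 3 := by
          have e1 : (P ^ (m + 1) * Q ^ k).mulVec v
              = (P ^ m).mulVec (P.mulVec ((Q ^ k).mulVec v)) := by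
            rw [Matrix.mulVec_mulVec, Matrix.mulVec_mulVec, pow_succ, Matrix.mul_assoc]
          have e2 : (P ^ m * Q ^ (k + 1)).mulVec v
              = (P ^ m).mulVec (Q.mulVec ((Q ^ k).mulVec v)) := by
            rw [Matrix.mulVec_mulVec, Matrix.mulVec_mulVec, pow_succ', ← Matrix.mul_assoc]
          rw [e1, e2, vangle_mulVec_orth (pow_orthogonal hPo m)]
          exact step _ hQkv
        have hih : vangle ((P ^ m * Q ^ (k + 1)).mulVec v) ((Q ^ (m + 1 + k)).mulVec v)
            ≤ m * (l + l ^ 3) := by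
          have : m + 1 + k = m + (k + 1) := by omega
          rw [this]
          exact ih (k + 1)
        push_cast
        nlinarith [hl0]
    have hfin : A ≤ N * (l + l ^ 3) := by
      have := tele N 0
      simp only [pow_zero, Matrix.mul_one, Nat.add_zero] at this
      rw [hA, axisAngleRot_pow x hNnat, axisAngleRot_pow y hNnat, ← hx', ← hy', ← hP, ← hQ]
      exact this
    have harith : (N : ℝ) * (l + l ^ 3) ≤ d * (1 - Kc / N)⁻¹ + 8 * d ^ 3 / (N : ℝ) ^ 2 := by
      have e1 : (N : ℝ) * l = d * (1 - Kc / N)⁻¹ := by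
        rw [hl]; field_simp
      have e2 : (N : ℝ) * l ^ 3 ≤ 8 * d ^ 3 / (N : ℝ) ^ 2 := by
        have h8 : l ^ 3 ≤ (2 * d / N) ^ 3 := by
          apply pow_le_pow_left₀ hl0 hl2d
        have : (N : ℝ) * (2 * d / N) ^ 3 = 8 * d ^ 3 / (N : ℝ) ^ 2 := by
          field_simp; ring
        nlinarith
      have : (N : ℝ) * (l + l ^ 3) = (N : ℝ) * l + (N : ℝ) * l ^ 3 := by ring
      linarith
    linarith
  -- take the limit
  have hg : Filter.Tendsto (fun N : ℕ => d * (1 - Kc / N)⁻¹ + 8 * d ^ 3 / (N : ℝ) ^ 2)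
      Filter.atTop (nhds d) := by
    have t1 : Filter.Tendsto (fun N : ℕ => Kc / (N : ℝ)) Filter.atTop (nhds 0) :=
      tendsto_const_div_atTop_nhds_zero_nat Kc
    have t2 : Filter.Tendsto (fun N : ℕ => (1 : ℝ) - Kc / N) Filter.atTop (nhds 1) := by
      have := Filter.Tendsto.sub (tendsto_const_nhds (x := (1:ℝ))) t1
      simpa using this
    have t3 : Filter.Tendsto (fun N : ℕ => (1 - Kc / (N:ℝ))⁻¹) Filter.atTop (nhds 1) := by
      have := t2.inv₀ (by norm_num)
      simpa using this
    have t4 : Filter.Tendsto (fun N : ℕ => d * (1 - Kc / (N:ℝ))⁻¹) Filter.atTop (nhds d) := by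
      have := t3.const_mul d
      simpa using this
    have t5 : Filter.Tendsto (fun N : ℕ => 8 * d ^ 3 / (N : ℝ) ^ 2) Filter.atTop (nhds 0) := by
      apply Filter.Tendsto.div_atTop (tendsto_const_nhds (x := 8 * d ^ 3))
      have h := tendsto_natCast_atTop_atTop (R := ℝ)
      exact (h.atTop_mul_atTop₀ h).congr (by intro N; rw [sq])
    have := t4.add t5
    simpa using this
  apply ge_of_tendsto hg
  have h1 : ∀ᶠ N : ℕ in Filter.atTop, 2 * Kc + 1 ≤ (N : ℝ) :=
    (tendsto_natCast_atTop_atTop (R := ℝ)).eventually_ge_atTop (2 * Kc + 1)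
  have h2 : ∀ᶠ N : ℕ in Filter.atTop, 4 * d + 1 ≤ (N : ℝ) :=
    (tendsto_natCast_atTop_atTop (R := ℝ)).eventually_ge_atTop (4 * d + 1)
  filter_upwards [h1, h2] with N hN1 hN2
  exact claim N hN1 hN2

end RotAngle

section Main

lemma norm3_cube_bound {r r₀ : Fin 3 → ℝ} {δ : ℝ} (hδ : 0 ≤ δ)
    (h : ∀ i, |r i - r₀ i| ≤ δ / 2) : norm3 (r - r₀) ≤ Real.sqrt 3 * δ / 2 := by
  have hsq : ∀ i, (r i - r₀ i) * (r i - r₀ i) ≤ (δ / 2) ^ 2 := by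
    intro i
    have := h i
    have h1 := abs_le.mp this
    nlinarith
  have hdot : dot3 (r - r₀) (r - r₀) ≤ 3 * (δ / 2) ^ 2 := by
    rw [dot3_expand]
    have h0 := hsq 0; have h1 := hsq 1; have h2 := hsq 2
    simp only [Pi.sub_apply] at *
    linarith
  calc norm3 (r - r₀) ≤ Real.sqrt (3 * (δ / 2) ^ 2) := Real.sqrt_le_sqrt hdot
    _ = Real.sqrt 3 * (δ / 2) := by
        rw [Real.sqrt_mul (by norm_num), Real.sqrt_sq (by linarith)]
    _ = Real.sqrt 3 * δ / 2 := by ring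

lemma inlierCount_le_card {J K : ℕ} (n : Fin J → Fin 3 → ℝ) (v : Fin K → Fin 3 → ℝ)
    (R : Matrix (Fin 3) (Fin 3) ℝ) (ε : ℝ) : inlierCount n v R ε ≤ J := by
  rw [inlierCount]
  calc ∑ j, Finset.univ.sup
        (fun k => if |vangle (n j) (R.mulVec (v k)) - Real.pi / 2| ≤ ε then 1 else 0)
      ≤ ∑ _j : Fin J, 1 := by
        apply Finset.sum_le_sum
        intro j _
        apply Finset.sup_le
        intro k _
        split_ifs <;> norm_num
    _ = J := by simp

end Main

/-- BnB bounds sandwich the in-cube maximum, and the gap vanishes as the cube shrinks: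
E(R_{r₀}) ≤ max over the cube of E(R_r) ≤ E_U, and if no angle hits the threshold ε
exactly, then E_U − E(R_{r₀}) → 0 as the cube side δ → 0⁺. -/
theorem bnb_bounds_and_convergence {J K : ℕ} (n : Fin J → Fin 3 → ℝ) (v : Fin K → Fin 3 → ℝ)
    (hn : ∀ j, norm3 (n j) = 1) (hv : ∀ k, norm3 (v k) = 1)
    (ε : ℝ) (hε : 0 ≤ ε) (r₀ : Fin 3 → ℝ) :
    (∀ δ : ℝ, 0 ≤ δ →
      inlierCount n v (axisAngleRot r₀) ε ≤
        sSup {m : ℕ | ∃ r : Fin 3 → ℝ, (∀ i, |r i - r₀ i| ≤ δ / 2) ∧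
          m = inlierCount n v (axisAngleRot r) ε} ∧
      sSup {m : ℕ | ∃ r : Fin 3 → ℝ, (∀ i, |r i - r₀ i| ≤ δ / 2) ∧
          m = inlierCount n v (axisAngleRot r) ε} ≤
        inlierCount n v (axisAngleRot r₀) (ε + min (Real.sqrt 3 * δ / 2) Real.pi)) ∧
    ((∀ (j : Fin J) (k : Fin K),
        |vangle (n j) ((axisAngleRot r₀).mulVec (v k)) - Real.pi / 2| ≠ ε) →
      Filter.Tendsto
        (fun δ : ℝ =>
          ((inlierCount n v (axisAngleRot r₀) (ε + min (Real.sqrt 3 * δ / 2) Real.pi) : ℝ) -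
            (inlierCount n v (axisAngleRot r₀) ε : ℝ)))
        (nhdsWithin 0 (Set.Ioi 0)) (nhds 0)) := by
  classical
  -- unit norm of rotated vectors
  have hRu : ∀ (r : Fin 3 → ℝ) (k : Fin K), norm3 ((axisAngleRot r).mulVec (v k)) = 1 :=
    fun r k => (norm3_mulVec_orth (exp_crossMat_orthogonal r) (v k)).trans (hv k)
  -- angles are close for nearby rotations
  have hang : ∀ (r : Fin 3 → ℝ) (j : Fin J) (k : Fin K),
      |vangle (n j) ((axisAngleRot r).mulVec (v k))
        - vangle (n j) ((axisAngleRot r₀).mulVec (v k))| ≤ norm3 (r - r₀) := by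
    intro r j k
    exact le_trans (abs_vangle_sub_le (hn j) (hRu r k) (hRu r₀ k))
      (rot_angle_le r r₀ (v k) (hv k))
  -- count comparison inside a cube
  have hcount : ∀ δ : ℝ, 0 ≤ δ → ∀ r : Fin 3 → ℝ, (∀ i, |r i - r₀ i| ≤ δ / 2) →
      inlierCount n v (axisAngleRot r) ε ≤
        inlierCount n v (axisAngleRot r₀) (ε + min (Real.sqrt 3 * δ / 2) Real.pi) := by
    intro δ hδ r hr
    rw [inlierCount, inlierCount]
    apply Finset.sum_le_sum
    intro j _
    apply Finset.sup_mono_fun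
    intro k _
    split_ifs with h1 h2
    · exact le_refl 1
    · -- h1 holds but h2 fails: contradiction
      exfalso
      apply h2
      set θr := vangle (n j) ((axisAngleRot r).mulVec (v k)) with hθr
      set θ0 := vangle (n j) ((axisAngleRot r₀).mulVec (v k)) with hθ0
      have hdiff : |θr - θ0| ≤ min (Real.sqrt 3 * δ / 2) Real.pi := by
        apply le_min
        · exact le_trans (hang r j k) (norm3_cube_bound hδ hr)
        · have p1 := vangle_nonneg (n j) ((axisAngleRot r).mulVec (v k))
          have p2 := vangle_le_pi (n j) ((axisAngleRot r).mulVec (v k))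
          have p3 := vangle_nonneg (n j) ((axisAngleRot r₀).mulVec (v k))
          have p4 := vangle_le_pi (n j) ((axisAngleRot r₀).mulVec (v k))
          rw [abs_le]
          constructor <;> [linarith; linarith]
      obtain ⟨hA1, hA2⟩ := abs_le.mp h1
      obtain ⟨hB1, hB2⟩ := abs_le.mp hdiff
      rw [abs_le]
      constructor <;> linarith
    · norm_num
    · exact le_refl 0
  constructor
  · intro δ hδ
    have hbdd : BddAbove {m : ℕ | ∃ r : Fin 3 → ℝ, (∀ i, |r i - r₀ i| ≤ δ / 2) ∧
        m = inlierCount n v (axisAngleRot r) ε} := by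
      refine ⟨J, ?_⟩
      rintro m ⟨r, _, rfl⟩
      exact inlierCount_le_card n v _ ε
    have hmem : inlierCount n v (axisAngleRot r₀) ε ∈
        {m : ℕ | ∃ r : Fin 3 → ℝ, (∀ i, |r i - r₀ i| ≤ δ / 2) ∧
          m = inlierCount n v (axisAngleRot r) ε} := by
      refine ⟨r₀, fun i => ?_, rfl⟩
      simp only [sub_self, abs_zero]
      linarith
    constructor
    · exact le_csSup hbdd hmem
    · apply csSup_le ⟨_, hmem⟩
      rintro m ⟨r, hr, rfl⟩
      exact hcount δ hδ r hr
  · intro hne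
    -- margin: below the threshold strictly, finitely many angles
    have hη : ∃ η : ℝ, 0 < η ∧ ∀ (j : Fin J) (k : Fin K),
        |vangle (n j) ((axisAngleRot r₀).mulVec (v k)) - Real.pi / 2| < ε + η →
        |vangle (n j) ((axisAngleRot r₀).mulVec (v k)) - Real.pi / 2| ≤ ε := by
      by_cases hJK : (Finset.univ : Finset (Fin J × Fin K)).Nonempty
      · set f : Fin J × Fin K → ℝ := fun p =>
          if |vangle (n p.1) ((axisAngleRot r₀).mulVec (v p.2)) - Real.pi / 2| ≤ ε then 1
          else |vangle (n p.1) ((axisAngleRot r₀).mulVec (v p.2)) - Real.pi / 2| - ε with hf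
        have hfpos : ∀ p : Fin J × Fin K, 0 < f p := by
          intro p
          simp only [hf]
          split_ifs with h
          · norm_num
          · push_neg at h
            have := hne p.1 p.2
            rw [sub_pos]
            cases lt_or_eq_of_le (le_of_lt h) with
            | inl h' => exact h'
            | inr h' => exact absurd h'.symm this
        refine ⟨Finset.univ.inf' hJK f, ?_, ?_⟩
        · rw [Finset.lt_inf'_iff]
          exact fun p _ => hfpos p
        · intro j k hlt
          by_contra hgt
          push_neg at hgt
          have hle : f (j, k) ≤ |vangle (n j) ((axisAngleRot r₀).mulVec (v k)) - Real.pi / 2| - ε := by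
            simp only [hf]
            rw [if_neg (not_le.mpr hgt)]
          have hinf : Finset.univ.inf' hJK f ≤ f (j, k) :=
            Finset.inf'_le f (Finset.mem_univ _)
          linarith
      · refine ⟨1, one_pos, fun j k _ => ?_⟩
        exact absurd (Finset.mem_univ (j, k)) (fun h => hJK ⟨(j, k), h⟩)
    obtain ⟨η, hη0, hηprop⟩ := hη
    have hev : ∀ᶠ δ : ℝ in nhdsWithin 0 (Set.Ioi 0),
        ((inlierCount n v (axisAngleRot r₀) (ε + min (Real.sqrt 3 * δ / 2) Real.pi) : ℝ) -
          (inlierCount n v (axisAngleRot r₀) ε : ℝ)) = 0 := by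
      have hIoo : Set.Ioo (0 : ℝ) η ∈ nhdsWithin 0 (Set.Ioi 0) :=
        Ioo_mem_nhdsGT_of_mem ⟨le_refl 0, hη0⟩
      filter_upwards [hIoo] with δ hδ
      have hδ0 : 0 < δ := hδ.1
      have hδη : δ < η := hδ.2
      have hμη : min (Real.sqrt 3 * δ / 2) Real.pi < η := by
        apply lt_of_le_of_lt (min_le_left _ _)
        have hs3 : Real.sqrt 3 < 2 := by
          rw [show (2 : ℝ) = Real.sqrt 4 by
            rw [show (4 : ℝ) = 2 ^ 2 by norm_num, Real.sqrt_sq (by norm_num)]]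
          exact Real.sqrt_lt_sqrt (by norm_num) (by norm_num)
        calc Real.sqrt 3 * δ / 2 < 2 * δ / 2 := by nlinarith
          _ = δ := by ring
          _ < η := hδη
      have hμ0 : 0 ≤ min (Real.sqrt 3 * δ / 2) Real.pi :=
        le_min (by positivity) (le_of_lt Real.pi_pos)
      have hceq : inlierCount n v (axisAngleRot r₀) (ε + min (Real.sqrt 3 * δ / 2) Real.pi)
          = inlierCount n v (axisAngleRot r₀) ε := by
        rw [inlierCount, inlierCount]
        apply Finset.sum_congr rfl
        intro j _
        apply Finset.sup_congr rfl
        intro k _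
        apply if_congr _ rfl rfl
        constructor
        · intro h
          apply hηprop j k
          calc |vangle (n j) ((axisAngleRot r₀).mulVec (v k)) - Real.pi / 2|
              ≤ ε + min (Real.sqrt 3 * δ / 2) Real.pi := h
            _ < ε + η := by linarith
        · intro h
          linarith
      rw [hceq, sub_self]
    apply Filter.Tendsto.congr' _ tendsto_const_nhds
    exact (hev.mono fun δ h => h.symm)
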